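/- Let p be a prime and let α, β, γ, δ be positive integers with 0 ≤ γ − δ ≤ min{α, β}, and let G = G(α,β,γ,δ). Then the element c is central in G and has order exactly p^γ, the quotient G/⟨c⟩ is isomorphic to ℤ/p^α × ℤ/p^β (generated by the images of a and b), and G has order p^{α+β+γ}. -/

import Mathlib

set_option linter.unusedSectionVars false
set_option linter.unreachableTactic false
set_option linter.unusedTactic false
set_option linter.unnecessarySeqFocus false
set_option maxHeartbeats 1000000

open scoped commutatorElement

/-- The relators for the presentation
`⟨a, b, c ∣ [a,c] = [b,c] = 1 = a^{p^α} = b^{p^β} = c^{p^γ}, [a,b] = c^{p^δ}⟩`,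
where `a`, `b`, `c` are the generators indexed by `0`, `1`, `2 : Fin 3`. -/
def pgRels (p α β γ δ : ℕ) : Set (FreeGroup (Fin 3)) :=
  {⁅FreeGroup.of (0 : Fin 3), FreeGroup.of (2 : Fin 3)⁆, ⁅FreeGroup.of (1 : Fin 3), FreeGroup.of (2 : Fin 3)⁆,
    FreeGroup.of (0 : Fin 3) ^ p ^ α, FreeGroup.of (1 : Fin 3) ^ p ^ β, FreeGroup.of (2 : Fin 3) ^ p ^ γ,
    ⁅FreeGroup.of (0 : Fin 3), FreeGroup.of (1 : Fin 3)⁆ * (FreeGroup.of (2 : Fin 3) ^ p ^ δ)⁻¹}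

/-- The group `G(α,β,γ,δ)` with presentation
`⟨a, b, c ∣ [a,c] = [b,c] = 1 = a^{p^α} = b^{p^β} = c^{p^γ}, [a,b] = c^{p^δ}⟩`. -/
abbrev GG (p α β γ δ : ℕ) : Type := PresentedGroup (pgRels p α β γ δ)

/-- The generator `a` of `G(α,β,γ,δ)`. -/
def ga (p α β γ δ : ℕ) : GG p α β γ δ := PresentedGroup.of (0 : Fin 3)
/-- The generator `b` of `G(α,β,γ,δ)`. -/
def gb (p α β γ δ : ℕ) : GG p α β γ δ := PresentedGroup.of (1 : Fin 3)
/-- The generator `c` of `G(α,β,γ,δ)`. -/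
def gc (p α β γ δ : ℕ) : GG p α β γ δ := PresentedGroup.of (2 : Fin 3)

namespace GGaux

@[ext]
structure M (p α β γ δ : ℕ) where
  x : ZMod (p ^ α)
  y : ZMod (p ^ β)
  z : ZMod (p ^ γ)

variable {p α β γ δ : ℕ}

def B (δ : ℕ) (x : ZMod (p ^ α)) (y : ZMod (p ^ β)) : ZMod (p ^ γ) :=
  (p : ZMod (p ^ γ)) ^ δ * ((x.val * y.val : ℕ) : ZMod (p ^ γ))

theorem keyA (hαδ : γ ≤ α + δ) [NeZero (p ^ α)] (n : ℤ) :
    (p : ZMod (p ^ γ)) ^ δ * (((n : ZMod (p ^ α)).val : ℤ) : ZMod (p ^ γ)) =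
      (p : ZMod (p ^ γ)) ^ δ * (n : ZMod (p ^ γ)) := by
  obtain ⟨m, hm⟩ : ((p : ℤ) ^ α) ∣ (((n : ZMod (p ^ α)).val : ℤ) - n) := by
    have h := (ZMod.intCast_zmod_eq_zero_iff_dvd (((n : ZMod (p ^ α)).val : ℤ) - n) (p ^ α)).mp
    push_cast at h ⊢
    exact h (by simp [ZMod.natCast_val, ZMod.cast_id])
  have hz : (p : ZMod (p ^ γ)) ^ (δ + α) = 0 := by
    have : ((p ^ (δ + α) : ℕ) : ZMod (p ^ γ)) = 0 := by
      rw [ZMod.natCast_eq_zero_iff]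
      exact pow_dvd_pow p (by omega)
    simpa using this
  have hval : (((n : ZMod (p ^ α)).val : ℤ) : ZMod (p ^ γ))
      = (n : ZMod (p ^ γ)) + (p : ZMod (p ^ γ)) ^ α * (m : ZMod (p ^ γ)) := by
    rw [show (((n : ZMod (p ^ α)).val : ℤ)) = n + (p : ℤ) ^ α * m by omega]
    push_cast
    ring
  rw [hval]
  linear_combination (m : ZMod (p ^ γ)) * hz

theorem keyA_cast (hαδ : γ ≤ α + δ) [NeZero (p ^ α)] (x : ZMod (p ^ α)) (n : ℤ)
    (h : x = (n : ZMod (p ^ α))) :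
    (p : ZMod (p ^ γ)) ^ δ * ((x.val : ℕ) : ZMod (p ^ γ)) =
      (p : ZMod (p ^ γ)) ^ δ * (n : ZMod (p ^ γ)) := by
  subst h
  have := keyA (p := p) (δ := δ) (γ := γ) hαδ n
  push_cast at this ⊢
  exact this

theorem keyB_cast (hβδ : γ ≤ β + δ) [NeZero (p ^ β)] (y : ZMod (p ^ β)) (n : ℤ)
    (h : y = (n : ZMod (p ^ β))) :
    (p : ZMod (p ^ γ)) ^ δ * ((y.val : ℕ) : ZMod (p ^ γ)) =
      (p : ZMod (p ^ γ)) ^ δ * (n : ZMod (p ^ γ)) :=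
  keyA_cast hβδ y n h

section Blemmas
variable [NeZero (p ^ α)] [NeZero (p ^ β)]

theorem B_add_left (hαδ : γ ≤ α + δ) (x x' : ZMod (p ^ α)) (y : ZMod (p ^ β)) :
    B (γ := γ) δ (x + x') y = B δ x y + B δ x' y := by
  have h := keyA_cast (δ := δ) (γ := γ) hαδ (x + x') ((x.val : ℤ) + x'.val)
    (by push_cast; simp [ZMod.natCast_val, ZMod.cast_id])
  push_cast [B] at h ⊢
  linear_combination ((y.val : ZMod (p ^ γ))) * h

theorem B_add_right (hβδ : γ ≤ β + δ) (x : ZMod (p ^ α)) (y y' : ZMod (p ^ β)) :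
    B (γ := γ) δ x (y + y') = B δ x y + B δ x y' := by
  have h := keyB_cast (δ := δ) (γ := γ) hβδ (y + y') ((y.val : ℤ) + y'.val)
    (by push_cast; simp [ZMod.natCast_val, ZMod.cast_id])
  push_cast [B] at h ⊢
  linear_combination ((x.val : ZMod (p ^ γ))) * h

theorem B_neg_left (hαδ : γ ≤ α + δ) (x : ZMod (p ^ α)) (y : ZMod (p ^ β)) :
    B (γ := γ) δ (-x) y = -(B δ x y) := by
  have h := keyA_cast (δ := δ) (γ := γ) hαδ (-x) (-(x.val : ℤ))
    (by push_cast; simp [ZMod.natCast_val, ZMod.cast_id])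
  push_cast [B] at h ⊢
  linear_combination ((y.val : ZMod (p ^ γ))) * h

theorem B_zero_left (y : ZMod (p ^ β)) : B δ (0 : ZMod (p ^ α)) y = (0 : ZMod (p ^ γ)) := by
  simp [B]

theorem B_zero_right (x : ZMod (p ^ α)) : B δ x (0 : ZMod (p ^ β)) = (0 : ZMod (p ^ γ)) := by
  simp [B]

theorem B_int (hαδ : γ ≤ α + δ) (hβδ : γ ≤ β + δ) (m n : ℤ) :
    B δ ((m : ZMod (p ^ α))) ((n : ZMod (p ^ β))) =
      (p : ZMod (p ^ γ)) ^ δ * (m : ZMod (p ^ γ)) * (n : ZMod (p ^ γ)) := by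
  have h1 := keyA_cast (δ := δ) (γ := γ) hαδ ((m : ZMod (p ^ α))) m rfl
  have h2 := keyB_cast (δ := δ) (γ := γ) hβδ ((n : ZMod (p ^ β))) n rfl
  push_cast [B] at h1 h2 ⊢
  linear_combination (((n : ZMod (p ^ β)).val : ZMod (p ^ γ))) * h1 + (m : ZMod (p ^ γ)) * h2

end Blemmas


instance : Mul (M p α β γ δ) := ⟨fun g h => ⟨g.x + h.x, g.y + h.y, g.z + h.z + B δ g.x h.y⟩⟩
instance : One (M p α β γ δ) := ⟨⟨0, 0, 0⟩⟩
instance : Inv (M p α β γ δ) := ⟨fun g => ⟨-g.x, -g.y, -g.z + B δ g.x g.y⟩⟩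

@[simp] theorem mul_x (g h : M p α β γ δ) : (g * h).x = g.x + h.x := rfl
@[simp] theorem mul_y (g h : M p α β γ δ) : (g * h).y = g.y + h.y := rfl
@[simp] theorem mul_z (g h : M p α β γ δ) : (g * h).z = g.z + h.z + B δ g.x h.y := rfl
@[simp] theorem one_x : (1 : M p α β γ δ).x = 0 := rfl
@[simp] theorem one_y : (1 : M p α β γ δ).y = 0 := rfl
@[simp] theorem one_z : (1 : M p α β γ δ).z = 0 := rfl
@[simp] theorem inv_x (g : M p α β γ δ) : (g⁻¹).x = -g.x := rfl
@[simp] theorem inv_y (g : M p α β γ δ) : (g⁻¹).y = -g.y := rfl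
@[simp] theorem inv_z (g : M p α β γ δ) : (g⁻¹).z = -g.z + B δ g.x g.y := rfl

section GroupM
variable [NeZero (p ^ α)] [NeZero (p ^ β)] [Fact (γ ≤ α + δ)] [Fact (γ ≤ β + δ)]

instance : Group (M p α β γ δ) where
  mul_assoc g h k := by
    ext <;> simp [B_add_left Fact.out, B_add_right Fact.out] <;> ring
  one_mul g := by ext <;> simp [B_zero_left]
  mul_one g := by ext <;> simp [B_zero_right]
  inv_mul_cancel g := by ext <;> simp [B_neg_left Fact.out]

variable (p α β γ δ) in
def mA : M p α β γ δ := ⟨1, 0, 0⟩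
variable (p α β γ δ) in
def mB : M p α β γ δ := ⟨0, 1, 0⟩
variable (p α β γ δ) in
def mC : M p α β γ δ := ⟨0, 0, 1⟩

theorem mA_pow (n : ℕ) : (mA p α β γ δ) ^ n = ⟨(n : ZMod (p ^ α)), 0, 0⟩ := by
  induction n with
  | zero => ext <;> simp
  | succ n ih => rw [pow_succ, ih]; ext <;> simp [mA, B_zero_right] <;> push_cast <;> ring

theorem mB_pow (n : ℕ) : (mB p α β γ δ) ^ n = ⟨0, (n : ZMod (p ^ β)), 0⟩ := by
  induction n with
  | zero => ext <;> simp
  | succ n ih => rw [pow_succ, ih]; ext <;> simp [mB, B_zero_left] <;> push_cast <;> ring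

theorem mC_pow (n : ℕ) : (mC p α β γ δ) ^ n = ⟨0, 0, (n : ZMod (p ^ γ))⟩ := by
  induction n with
  | zero => ext <;> simp
  | succ n ih => rw [pow_succ, ih]; ext <;> simp [mC, B_zero_left] <;> push_cast <;> ring

theorem mA_ord : (mA p α β γ δ) ^ (p ^ α) = 1 := by
  rw [mA_pow]; ext <;> simp

theorem mB_ord : (mB p α β γ δ) ^ (p ^ β) = 1 := by
  rw [mB_pow]; ext <;> simp

theorem mC_ord : (mC p α β γ δ) ^ (p ^ γ) = 1 := by
  rw [mC_pow]; ext <;> simp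

theorem orderOf_mC [NeZero (p ^ γ)] : orderOf (mC p α β γ δ) = p ^ γ := by
  have h1 : orderOf (mC p α β γ δ) ∣ p ^ γ := orderOf_dvd_of_pow_eq_one mC_ord
  have h2 : p ^ γ ∣ orderOf (mC p α β γ δ) := by
    have h := pow_orderOf_eq_one (mC p α β γ δ)
    rw [mC_pow] at h
    have := congrArg M.z h
    simpa [ZMod.natCast_eq_zero_iff] using this
  exact Nat.dvd_antisymm h1 h2

theorem mC_comm (g : M p α β γ δ) : g * mC p α β γ δ = mC p α β γ δ * g := by
  ext <;> simp [mC, B_zero_left, B_zero_right] <;> ring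

theorem mAmB : mA p α β γ δ * mB p α β γ δ =
    (mC p α β γ δ) ^ (p ^ δ) * (mB p α β γ δ * mA p α β γ δ) := by
  have hB11 : B (γ := γ) δ (1 : ZMod (p ^ α)) (1 : ZMod (p ^ β)) = (p : ZMod (p ^ γ)) ^ δ := by
    simpa using B_int (p := p) (α := α) (β := β) (γ := γ) (δ := δ) Fact.out Fact.out 1 1
  rw [mC_pow]
  ext <;> simp [mA, mB, B_zero_left, B_zero_right, hB11] <;> push_cast <;> ring

theorem comm_mAmB : ⁅mA p α β γ δ, mB p α β γ δ⁆ = (mC p α β γ δ) ^ (p ^ δ) := by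
  rw [commutatorElement_def, mAmB]
  group

end GroupM

variable (p α β γ δ) in
def mEquiv : M p α β γ δ ≃ (ZMod (p ^ α) × ZMod (p ^ β) × ZMod (p ^ γ)) where
  toFun g := (g.x, g.y, g.z)
  invFun t := ⟨t.1, t.2.1, t.2.2⟩
  left_inv g := rfl
  right_inv t := rfl

section GroupM2
variable [NeZero (p ^ α)] [NeZero (p ^ β)] [Fact (γ ≤ α + δ)] [Fact (γ ≤ β + δ)]

variable (p α β γ δ) in
def proj12 : M p α β γ δ →* Multiplicative (ZMod (p ^ α)) × Multiplicative (ZMod (p ^ β)) where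
  toFun g := (Multiplicative.ofAdd g.x, Multiplicative.ofAdd g.y)
  map_one' := rfl
  map_mul' g h := rfl

theorem proj12_surj : Function.Surjective (proj12 p α β γ δ) := by
  intro u
  exact ⟨⟨Multiplicative.toAdd u.1, Multiplicative.toAdd u.2, 0⟩, rfl⟩

end GroupM2

section Gside
variable {p α β γ δ : ℕ}

theorem rel_one {r : FreeGroup (Fin 3)} (h : r ∈ pgRels p α β γ δ) :
    PresentedGroup.mk (pgRels p α β γ δ) r = 1 :=
  (QuotientGroup.eq_one_iff r).mpr (Subgroup.subset_normalClosure h)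

theorem rel_ac : ga p α β γ δ * gc p α β γ δ = gc p α β γ δ * ga p α β γ δ := by
  have h := rel_one (p := p) (α := α) (β := β) (γ := γ) (δ := δ)
    (Set.mem_insert _ _)
  rw [map_commutatorElement] at h
  exact commutatorElement_eq_one_iff_mul_comm.mp h

theorem rel_bc : gb p α β γ δ * gc p α β γ δ = gc p α β γ δ * gb p α β γ δ := by
  have h := rel_one (p := p) (α := α) (β := β) (γ := γ) (δ := δ)
    (Set.mem_insert_of_mem _ (Set.mem_insert _ _))
  rw [map_commutatorElement] at h
  exact commutatorElement_eq_one_iff_mul_comm.mp h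

theorem rel_a : (ga p α β γ δ) ^ (p ^ α) = 1 := by
  have h := rel_one (p := p) (α := α) (β := β) (γ := γ) (δ := δ)
    (Set.mem_insert_of_mem _ (Set.mem_insert_of_mem _ (Set.mem_insert _ _)))
  rwa [map_pow] at h

theorem rel_b : (gb p α β γ δ) ^ (p ^ β) = 1 := by
  have h := rel_one (p := p) (α := α) (β := β) (γ := γ) (δ := δ)
    (Set.mem_insert_of_mem _ (Set.mem_insert_of_mem _ (Set.mem_insert_of_mem _ (Set.mem_insert _ _))))
  rwa [map_pow] at h

theorem rel_c : (gc p α β γ δ) ^ (p ^ γ) = 1 := by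
  have h := rel_one (p := p) (α := α) (β := β) (γ := γ) (δ := δ)
    (Set.mem_insert_of_mem _ (Set.mem_insert_of_mem _ (Set.mem_insert_of_mem _
      (Set.mem_insert_of_mem _ (Set.mem_insert _ _)))))
  rwa [map_pow] at h

theorem rel_ab : ⁅ga p α β γ δ, gb p α β γ δ⁆ = (gc p α β γ δ) ^ (p ^ δ) := by
  have h := rel_one (p := p) (α := α) (β := β) (γ := γ) (δ := δ)
    (Set.mem_insert_of_mem _ (Set.mem_insert_of_mem _ (Set.mem_insert_of_mem _
      (Set.mem_insert_of_mem _ (Set.mem_insert_of_mem _ (Set.mem_singleton _))))))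
  rw [map_mul, map_inv, map_pow, map_commutatorElement] at h
  exact mul_inv_eq_one.mp h

theorem gc_comm (g : GG p α β γ δ) : g * gc p α β γ δ = gc p α β γ δ * g := by
  have key : (⊤ : Subgroup (GG p α β γ δ)) ≤ Subgroup.centralizer {gc p α β γ δ} := by
    rw [← PresentedGroup.closure_range_of (pgRels p α β γ δ)]
    apply (Subgroup.closure_le _).mpr
    rintro _ ⟨i, rfl⟩
    simp only [SetLike.mem_coe, Subgroup.mem_centralizer_iff]
    rintro h hh
    rw [Set.mem_singleton_iff] at hh
    subst hh
    fin_cases i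
    · exact rel_ac.symm
    · exact rel_bc.symm
    · rfl
  have := key (Subgroup.mem_top g)
  rw [Subgroup.mem_centralizer_iff] at this
  exact (this _ (Set.mem_singleton _)).symm

theorem commute_gc (g : GG p α β γ δ) : Commute (gc p α β γ δ) g := (gc_comm g).symm

theorem hcz (k : ℤ) (g : GG p α β γ δ) :
    (gc p α β γ δ) ^ k * g = g * (gc p α β γ δ) ^ k :=
  ((commute_gc g).zpow_left k).eq

theorem hmove (m : ℤ) (g r : GG p α β γ δ) :
    (gc p α β γ δ) ^ m * (g * r) = g * ((gc p α β γ δ) ^ m * r) := by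
  rw [← mul_assoc, hcz, mul_assoc]

theorem hmerge {G : Type*} [Group G] (x : G) (m n : ℤ) (r : G) :
    x ^ m * (x ^ n * r) = x ^ (m + n) * r := by
  rw [← mul_assoc, ← zpow_add]


theorem conj_gb : ga p α β γ δ * gb p α β γ δ * (ga p α β γ δ)⁻¹ =
    (gc p α β γ δ) ^ ((p ^ δ : ℕ) : ℤ) * gb p α β γ δ := by
  have h := rel_ab (p := p) (α := α) (β := β) (γ := γ) (δ := δ)
  rw [commutatorElement_def] at h
  rw [zpow_natCast]
  exact mul_inv_eq_iff_eq_mul.mp h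

theorem conj_gc_zpow (h : GG p α β γ δ) (m : ℤ) :
    h * (gc p α β γ δ) ^ m * h⁻¹ = (gc p α β γ δ) ^ m := by
  rw [← hcz, mul_assoc, mul_inv_cancel, mul_one]

theorem sigma_pow_gb (i j : ℤ) :
    ((MulAut.conj (ga p α β γ δ)) ^ i) ((gb p α β γ δ) ^ j) =
      (gc p α β γ δ) ^ (((p ^ δ : ℕ) : ℤ) * i * j) * (gb p α β γ δ) ^ j := by
  have hfixc : ∀ (i : ℤ) (m : ℤ),
      ((MulAut.conj (ga p α β γ δ)) ^ i) ((gc p α β γ δ) ^ m) = (gc p α β γ δ) ^ m := by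
    intro i m
    rw [← map_zpow (MulAut.conj (G := GG p α β γ δ)) (ga p α β γ δ) i]
    rw [MulAut.conj_apply]
    exact conj_gc_zpow _ m
  have hstep : ∀ j : ℤ, (MulAut.conj (ga p α β γ δ)) ((gb p α β γ δ) ^ j) =
      (gc p α β γ δ) ^ (((p ^ δ : ℕ) : ℤ) * j) * (gb p α β γ δ) ^ j := by
    intro j
    rw [map_zpow, MulAut.conj_apply, conj_gb,
      ((commute_gc (gb p α β γ δ)).zpow_left _).mul_zpow, ← zpow_mul]
  induction i using Int.induction_on with
  | zero => simp
  | succ i ih =>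
    have : ((MulAut.conj (ga p α β γ δ)) ^ ((i : ℤ) + 1)) ((gb p α β γ δ) ^ j)
        = ((MulAut.conj (ga p α β γ δ)) ^ (i : ℤ)) ((MulAut.conj (ga p α β γ δ)) ((gb p α β γ δ) ^ j)) := by
      rw [zpow_add_one, MulAut.mul_apply]
    rw [this, hstep, map_mul, hfixc, ih, hmerge]
    congr 1
    ring
  | pred i ih =>
    have hinj : Function.Injective (MulAut.conj (ga p α β γ δ)) := (MulAut.conj (ga p α β γ δ)).injective
    apply hinj
    have h1 : (MulAut.conj (ga p α β γ δ)) (((MulAut.conj (ga p α β γ δ)) ^ ((-(i:ℤ)) - 1)) ((gb p α β γ δ) ^ j))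
        = ((MulAut.conj (ga p α β γ δ)) ^ (-(i:ℤ))) ((gb p α β γ δ) ^ j) := by
      rw [← MulAut.mul_apply, ← zpow_one_add]
      congr 2
      ring
    have hfix1 : ∀ m : ℤ, (MulAut.conj (ga p α β γ δ)) ((gc p α β γ δ) ^ m) = (gc p α β γ δ) ^ m := by
      intro m
      rw [MulAut.conj_apply]
      exact conj_gc_zpow _ m
    rw [h1, ih, map_mul, hfix1, hstep, hmerge]
    congr 1
    ring

theorem comm1 (i j : ℤ) :
    (gb p α β γ δ) ^ j * (ga p α β γ δ) ^ i =
      (ga p α β γ δ) ^ i * ((gb p α β γ δ) ^ j * (gc p α β γ δ) ^ (-(((p ^ δ : ℕ) : ℤ) * i * j))) := by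
  have h := sigma_pow_gb (p := p) (α := α) (β := β) (γ := γ) (δ := δ) i j
  rw [← map_zpow (MulAut.conj (G := GG p α β γ δ)) (ga p α β γ δ) i, MulAut.conj_apply] at h
  have h2 := mul_inv_eq_iff_eq_mul.mp h
  simp only [mul_assoc] at h2
  calc (gb p α β γ δ) ^ j * (ga p α β γ δ) ^ i
      = (gc p α β γ δ) ^ (-(((p ^ δ : ℕ) : ℤ) * i * j)) *
          ((gc p α β γ δ) ^ ((((p ^ δ : ℕ) : ℤ)) * (i * j)) * ((gb p α β γ δ) ^ j * (ga p α β γ δ) ^ i)) := by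
        rw [hmerge,
          show (-(((p ^ δ : ℕ) : ℤ) * i * j) + ((p ^ δ : ℕ) : ℤ) * (i * j)) = 0 by ring,
          zpow_zero, one_mul]
    _ = (gc p α β γ δ) ^ (-(((p ^ δ : ℕ) : ℤ) * i * j)) * ((ga p α β γ δ) ^ i * (gb p α β γ δ) ^ j) := by
        rw [← h2]
    _ = (ga p α β γ δ) ^ i * ((gc p α β γ δ) ^ (-(((p ^ δ : ℕ) : ℤ) * i * j)) * (gb p α β γ δ) ^ j) :=
        hmove _ _ _
    _ = (ga p α β γ δ) ^ i * ((gb p α β γ δ) ^ j * (gc p α β γ δ) ^ (-(((p ^ δ : ℕ) : ℤ) * i * j))) := by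
        rw [hcz]

theorem comm1' (i j : ℤ) (r : GG p α β γ δ) :
    (gb p α β γ δ) ^ j * ((ga p α β γ δ) ^ i * r) =
      (ga p α β γ δ) ^ i * ((gb p α β γ δ) ^ j * ((gc p α β γ δ) ^ (-(((p ^ δ : ℕ) : ℤ) * i * j)) * r)) := by
  have h := comm1 (p := p) (α := α) (β := β) (γ := γ) (δ := δ) i j
  calc (gb p α β γ δ) ^ j * ((ga p α β γ δ) ^ i * r)
      = ((gb p α β γ δ) ^ j * (ga p α β γ δ) ^ i) * r := by rw [mul_assoc]
    _ = ((ga p α β γ δ) ^ i * ((gb p α β γ δ) ^ j * (gc p α β γ δ) ^ (-(((p ^ δ : ℕ) : ℤ) * i * j)))) * r := by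
        rw [h]
    _ = _ := by simp only [mul_assoc]

theorem NF_mul (i j k i' j' k' : ℤ) :
    ((ga p α β γ δ) ^ i * ((gb p α β γ δ) ^ j * (gc p α β γ δ) ^ k)) *
      ((ga p α β γ δ) ^ i' * ((gb p α β γ δ) ^ j' * (gc p α β γ δ) ^ k')) =
    (ga p α β γ δ) ^ (i + i') * ((gb p α β γ δ) ^ (j + j') *
      (gc p α β γ δ) ^ (-(((p ^ δ : ℕ) : ℤ) * i' * j) + (k + k'))) := by
  simp only [mul_assoc]
  rw [hmove k ((ga p α β γ δ) ^ i'), hmove k ((gb p α β γ δ) ^ j'),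
    comm1' i' j, hmove (-(((p ^ δ : ℕ) : ℤ) * i' * j)) ((gb p α β γ δ) ^ j'),
    hmerge (ga p α β γ δ), hmerge (gb p α β γ δ), hmerge (gc p α β γ δ), ← zpow_add]
  congr 1
  congr 1
  congr 1
  ring


theorem exists_NF (g : GG p α β γ δ) :
    ∃ i j k : ℤ, g = (ga p α β γ δ) ^ i * ((gb p α β γ δ) ^ j * (gc p α β γ δ) ^ k) := by
  have hx : g ∈ Subgroup.closure (Set.range (PresentedGroup.of (rels := pgRels p α β γ δ))) := by
    rw [PresentedGroup.closure_range_of]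
    trivial
  induction hx using Subgroup.closure_induction with
  | mem x hx =>
    obtain ⟨i, rfl⟩ := hx
    fin_cases i
    · exact ⟨1, 0, 0, by simp [ga]⟩
    · exact ⟨0, 1, 0, by simp [gb]⟩
    · exact ⟨0, 0, 1, by simp [gc]⟩
  | one => exact ⟨0, 0, 0, by simp⟩
  | mul x y hx hy ihx ihy =>
    obtain ⟨i, j, k, rfl⟩ := ihx
    obtain ⟨i', j', k', rfl⟩ := ihy
    exact ⟨i + i', j + j', -(((p ^ δ : ℕ) : ℤ) * i' * j) + (k + k'), NF_mul i j k i' j' k'⟩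
  | inv x hx ih =>
    obtain ⟨i, j, k, rfl⟩ := ih
    refine ⟨-i, -j, -k - ((p ^ δ : ℕ) : ℤ) * i * j, ?_⟩
    apply inv_eq_of_mul_eq_one_right
    rw [NF_mul,
      show i + -i = 0 by ring,
      show j + -j = 0 by ring,
      show -(((p ^ δ : ℕ) : ℤ) * -i * j) + (k + (-k - ((p ^ δ : ℕ) : ℤ) * i * j)) = 0 by ring]
    simp

theorem zpow_reduce {G : Type*} [Group G] {x : G} {N : ℕ} [NeZero N] (h : x ^ N = 1) (i : ℤ) :
    x ^ i = x ^ ((i : ZMod N).val) := by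
  have h2 : x ^ (N : ℤ) = 1 := by rw [zpow_natCast, h]
  have h3 : ((i : ZMod N).val : ℤ) = i % N := ZMod.val_intCast i
  calc x ^ i = x ^ ((N : ℤ) * (i / (N : ℤ)) + i % (N : ℤ)) := by rw [Int.mul_ediv_add_emod]
    _ = (x ^ (N : ℤ)) ^ (i / (N : ℤ)) * x ^ (i % (N : ℤ)) := by rw [zpow_add, zpow_mul]
    _ = x ^ (i % (N : ℤ)) := by rw [h2, one_zpow, one_mul]
    _ = x ^ (((i : ZMod N).val : ℤ)) := by rw [h3]
    _ = _ := zpow_natCast x _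

theorem surjNF [NeZero (p ^ α)] [NeZero (p ^ β)] [NeZero (p ^ γ)] :
    Function.Surjective (fun t : ZMod (p ^ α) × ZMod (p ^ β) × ZMod (p ^ γ) =>
      (ga p α β γ δ) ^ (t.1.val) * ((gb p α β γ δ) ^ (t.2.1.val) * (gc p α β γ δ) ^ (t.2.2.val))) := by
  intro g
  obtain ⟨i, j, k, rfl⟩ := exists_NF g
  refine ⟨⟨(i : ZMod (p ^ α)), (j : ZMod (p ^ β)), (k : ZMod (p ^ γ))⟩, ?_⟩
  simp only
  rw [zpow_reduce rel_a i, zpow_reduce rel_b j, zpow_reduce rel_c k]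

end Gside

end GGaux

/-- For `G = G(α,β,γ,δ)`: the element `c` is central of order exactly `p ^ γ`, the quotient
`G/⟨c⟩` is isomorphic to `ℤ/p^α × ℤ/p^β` generated by the images of `a` and `b` (expressed via
a surjection `G → ℤ/p^α × ℤ/p^β` with kernel `⟨c⟩` sending `a`, `b` to the standard generators),
and `G` has order `p ^ (α + β + γ)`. -/
theorem GG_structure
    (p : ℕ) (hp : p.Prime) (α β γ δ : ℕ)
    (hα : 0 < α) (hβ : 0 < β) (hγ : 0 < γ) (hδ : 0 < δ)
    (h1 : δ ≤ γ) (h2 : γ - δ ≤ min α β) :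
    gc p α β γ δ ∈ Subgroup.center (GG p α β γ δ) ∧
    orderOf (gc p α β γ δ) = p ^ γ ∧
    (∃ φ : GG p α β γ δ →*
        Multiplicative (ZMod (p ^ α)) × Multiplicative (ZMod (p ^ β)),
      Function.Surjective φ ∧
      φ.ker = Subgroup.zpowers (gc p α β γ δ) ∧
      φ (ga p α β γ δ) = (Multiplicative.ofAdd 1, 1) ∧
      φ (gb p α β γ δ) = (1, Multiplicative.ofAdd 1)) ∧
    Nat.card (GG p α β γ δ) = p ^ (α + β + γ) := by
  haveI hFα : Fact (γ ≤ α + δ) := ⟨by omega⟩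
  haveI hFβ : Fact (γ ≤ β + δ) := ⟨by omega⟩
  haveI : NeZero (p ^ α) := ⟨(pow_pos hp.pos α).ne'⟩
  haveI : NeZero (p ^ β) := ⟨(pow_pos hp.pos β).ne'⟩
  haveI : NeZero (p ^ γ) := ⟨(pow_pos hp.pos γ).ne'⟩
  have hrels : ∀ r ∈ pgRels p α β γ δ,
      FreeGroup.lift (![GGaux.mA p α β γ δ, GGaux.mB p α β γ δ, GGaux.mC p α β γ δ]) r = 1 := by
    intro r hr
    simp only [pgRels, Set.mem_insert_iff, Set.mem_singleton_iff] at hr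
    rcases hr with rfl | rfl | rfl | rfl | rfl | rfl
    · rw [map_commutatorElement]
      simp only [FreeGroup.lift_apply_of]
      exact commutatorElement_eq_one_iff_mul_comm.mpr (GGaux.mC_comm _)
    · rw [map_commutatorElement]
      simp only [FreeGroup.lift_apply_of]
      exact commutatorElement_eq_one_iff_mul_comm.mpr (GGaux.mC_comm _)
    · rw [map_pow]
      simp only [FreeGroup.lift_apply_of]
      exact GGaux.mA_ord
    · rw [map_pow]
      simp only [FreeGroup.lift_apply_of]
      exact GGaux.mB_ord
    · rw [map_pow]
      simp only [FreeGroup.lift_apply_of]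
      exact GGaux.mC_ord
    · rw [map_mul, map_inv, map_pow, map_commutatorElement]
      simp only [FreeGroup.lift_apply_of]
      exact mul_inv_eq_one.mpr GGaux.comm_mAmB
  set Φ : GG p α β γ δ →* GGaux.M p α β γ δ := PresentedGroup.toGroup hrels with hΦdef
  have hΦa : Φ (ga p α β γ δ) = GGaux.mA p α β γ δ := PresentedGroup.toGroup.of hrels
  have hΦb : Φ (gb p α β γ δ) = GGaux.mB p α β γ δ := PresentedGroup.toGroup.of hrels
  have hΦc : Φ (gc p α β γ δ) = GGaux.mC p α β γ δ := PresentedGroup.toGroup.of hrels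
  have hΦsurj : Function.Surjective Φ := by
    intro m
    refine ⟨(ga p α β γ δ) ^ (m.x.val) * ((gb p α β γ δ) ^ (m.y.val) *
      (gc p α β γ δ) ^ ((m.z - GGaux.B δ m.x m.y).val)), ?_⟩
    rw [map_mul, map_mul, map_pow, map_pow, map_pow, hΦa, hΦb, hΦc,
      GGaux.mA_pow, GGaux.mB_pow, GGaux.mC_pow]
    ext <;>
      simp [ZMod.natCast_val, ZMod.cast_id, GGaux.B_zero_left, GGaux.B_zero_right]
  have hfin : Finite (GG p α β γ δ) := Finite.of_surjective _ (GGaux.surjNF)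
  have hcard_le : Nat.card (GG p α β γ δ) ≤ p ^ α * (p ^ β * p ^ γ) := by
    have h := Nat.card_le_card_of_surjective _ (GGaux.surjNF (p := p) (α := α) (β := β) (γ := γ) (δ := δ))
    simpa [Nat.card_prod, Nat.card_zmod] using h
  have hMcard : Nat.card (GGaux.M p α β γ δ) = p ^ α * (p ^ β * p ^ γ) := by
    rw [Nat.card_congr (GGaux.mEquiv p α β γ δ)]
    simp [Nat.card_prod, Nat.card_zmod]
  have hcard_ge : Nat.card (GGaux.M p α β γ δ) ≤ Nat.card (GG p α β γ δ) :=
    Nat.card_le_card_of_surjective Φ hΦsurj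
  have hcard : Nat.card (GG p α β γ δ) = p ^ (α + β + γ) := by
    rw [pow_add, pow_add, mul_assoc]
    omega
  have hΦbij : Function.Bijective Φ :=
    (Nat.bijective_iff_surjective_and_card Φ).mpr ⟨hΦsurj, by omega⟩
  refine ⟨Subgroup.mem_center_iff.mpr (fun g => GGaux.gc_comm g), ?_, ?_, hcard⟩
  · have hd1 : orderOf (gc p α β γ δ) ∣ p ^ γ := orderOf_dvd_of_pow_eq_one GGaux.rel_c
    have hd2 : orderOf (GGaux.mC p α β γ δ) ∣ orderOf (gc p α β γ δ) := by
      rw [← hΦc]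
      exact orderOf_map_dvd Φ _
    rw [GGaux.orderOf_mC] at hd2
    exact Nat.dvd_antisymm hd1 hd2
  · refine ⟨(GGaux.proj12 p α β γ δ).comp Φ, (GGaux.proj12_surj).comp hΦsurj, ?_, ?_, ?_⟩
    · ext g
      constructor
      · intro hg
        rw [MonoidHom.mem_ker, MonoidHom.comp_apply] at hg
        have hx : (Φ g).x = 0 := by
          have := congrArg Prod.fst hg
          simpa [GGaux.proj12] using this
        have hy : (Φ g).y = 0 := by
          have := congrArg Prod.snd hg
          simpa [GGaux.proj12] using this
        have hzz : Φ ((gc p α β γ δ) ^ ((Φ g).z.val)) = Φ g := by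
          rw [map_pow, hΦc, GGaux.mC_pow]
          ext
          · simp [hx]
          · simp [hy]
          · simp [ZMod.natCast_val, ZMod.cast_id]
        have := hΦbij.injective hzz
        rw [← this]
        exact ⟨((Φ g).z.val : ℤ), zpow_natCast _ _⟩
      · rintro ⟨k, rfl⟩
        rw [MonoidHom.mem_ker, map_zpow, MonoidHom.comp_apply, hΦc]
        have : (GGaux.proj12 p α β γ δ) (GGaux.mC p α β γ δ) = 1 := rfl
        rw [this, one_zpow]
    · rw [MonoidHom.comp_apply, hΦa]
      rfl
    · rw [MonoidHom.comp_apply, hΦb]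
      rfl
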